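/- Let h ≥ 2, let A be a finite set, let q be a probability mass function on A, let R be a finite set with probability mass function p, and for each party i ∈ {1,…,h} let p_{A_i} : R → (A → [0,1]) be a strategy with ∑_{a ∈ A} p_{A_i}(r)(a) = 1 for all r. If ∑_{r ∈ R} p(r)·p_{A_1}(r)(a₁)⋯p_{A_h}(r)(a_h) = 𝟙[a₁ = ⋯ = a_h]·q(a₁) for all a₁,…,a_h ∈ A, then |R| ≥ |supp(q)|, where supp(q) = {a ∈ A : q(a) > 0}. -/
import Mathlib

private lemma all_pos_of_prod_pos {ι : Type*} [Fintype ι] (f : ι → ℝ)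
    (h0 : ∀ i, 0 ≤ f i) (hp : 0 < ∏ i, f i) : ∀ i, 0 < f i := by
  intro i
  rcases lt_or_eq_of_le (h0 i) with h | h
  · exact h
  · exfalso
    have : (∏ j, f j) = 0 := Finset.prod_eq_zero (Finset.mem_univ i) h.symm
    rw [this] at hp
    exact lt_irrefl _ hp

/-- in the no-input multipartite Bell scenario, generating the perfectly
correlated distribution `𝟙[a₁ = ⋯ = a_h]·q(a₁)` requires a shared randomness source
of cardinality at least `|supp(q)|`. -/
theorem stmt_4 {A R : Type*} [Fintype A] [Fintype R] [DecidableEq A]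
    (h : ℕ) (hh : 2 ≤ h)
    (p : R → ℝ) (hp0 : ∀ r, 0 ≤ p r) (hp1 : ∑ r, p r = 1)
    (q : A → ℝ) (hq0 : ∀ a, 0 ≤ q a) (hq1 : ∑ a, q a = 1)
    (pA : Fin h → R → A → ℝ)
    (hpA0 : ∀ i r a, 0 ≤ pA i r a) (hpA1 : ∀ i r a, pA i r a ≤ 1)
    (hpAsum : ∀ i r, ∑ a, pA i r a = 1)
    (hgen : ∀ a : Fin h → A,
      ∑ r, p r * ∏ i, pA i r (a i) =
        if ∀ i, a i = a ⟨0, by omega⟩ then q (a ⟨0, by omega⟩) else 0) :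
    Fintype.card R ≥ (Finset.univ.filter fun a : A => 0 < q a).card := by
  classical
  -- For each a with q a > 0, there is r with positive joint term
  have key : ∀ a : A, 0 < q a → ∃ r : R, 0 < p r * ∏ i, pA i r a := by
    intro a ha
    have hg := hgen (fun _ => a)
    rw [if_pos (fun _ => rfl)] at hg
    by_contra hcon
    push_neg at hcon
    have hz : ∑ r : R, p r * ∏ i, pA i r a = 0 :=
      le_antisymm (Finset.sum_nonpos (fun r _ => hcon r))
        (Finset.sum_nonneg fun r _ =>
          mul_nonneg (hp0 r) (Finset.prod_nonneg fun i _ => hpA0 i r a))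
    rw [hz] at hg
    linarith
  set S := Finset.univ.filter fun a : A => 0 < q a with hS
  have hchoice : ∀ a ∈ S, ∃ r : R, 0 < p r * ∏ i, pA i r a := by
    intro a haS
    exact key a (Finset.mem_filter.mp haS).2
  choose f hf using hchoice
  have hinj : Function.Injective (fun a : S => f a a.2) := by
    rintro ⟨a, haS⟩ ⟨b, hbS⟩ hfe
    simp only [Subtype.mk.injEq]
    by_contra hab
    have hrb : f a haS = f b hbS := hfe
    obtain ⟨r, hra, hrb'⟩ : ∃ r : R, 0 < p r * ∏ i, pA i r a ∧ 0 < p r * ∏ i, pA i r b :=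
      ⟨f a haS, hf a haS, hrb ▸ hf b hbS⟩
    have hpr : 0 < p r := by
      by_contra hc
      have h0 : p r = 0 := le_antisymm (not_lt.mp hc) (hp0 r)
      rw [h0, zero_mul] at hra
      exact lt_irrefl _ hra
    have hprodA : 0 < ∏ i, pA i r a := by
      rcases le_or_gt (∏ i, pA i r a) 0 with hc | hc
      · nlinarith
      · exact hc
    have hprodB : 0 < ∏ i, pA i r b := by
      rcases le_or_gt (∏ i, pA i r b) 0 with hc | hc
      · nlinarith
      · exact hc
    have hpa : ∀ i, 0 < pA i r a :=
      all_pos_of_prod_pos _ (fun i => hpA0 i r a) hprodA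
    have hpb : ∀ i, 0 < pA i r b :=
      all_pos_of_prod_pos _ (fun i => hpA0 i r b) hprodB
    -- mixed outcome vector
    have hne : (⟨1, by omega⟩ : Fin h) ≠ ⟨0, by omega⟩ := by
      intro hc
      exact one_ne_zero (congrArg Fin.val hc)
    set v : Fin h → A := fun i => if i = (⟨0, by omega⟩ : Fin h) then a else b with hv
    have hv0 : v ⟨0, by omega⟩ = a := if_pos rfl
    have hv1 : v ⟨1, by omega⟩ = b := if_neg hne
    have hcond : ¬ (∀ i, v i = v ⟨0, by omega⟩) := by
      intro hall
      have h1 := hall ⟨1, by omega⟩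
      rw [hv1, hv0] at h1
      exact hab h1.symm
    have hg := hgen v
    rw [if_neg hcond] at hg
    have hterm : 0 < p r * ∏ i, pA i r (v i) := by
      apply mul_pos hpr
      apply Finset.prod_pos
      intro i _
      show 0 < pA i r (if i = (⟨0, by omega⟩ : Fin h) then a else b)
      by_cases hi : i = (⟨0, by omega⟩ : Fin h)
      · rw [if_pos hi]; exact hpa i
      · rw [if_neg hi]; exact hpb i
    have hge : (0:ℝ) < ∑ r', p r' * ∏ i, pA i r' (v i) :=
      Finset.sum_pos' (fun r' _ =>
        mul_nonneg (hp0 r') (Finset.prod_nonneg fun i _ => hpA0 i r' (v i)))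
        ⟨r, Finset.mem_univ r, hterm⟩
    rw [hg] at hge
    exact lt_irrefl _ hge
  calc (Finset.univ.filter fun a : A => 0 < q a).card = Fintype.card S :=
        (Fintype.card_coe S).symm
    _ ≤ Fintype.card R := Fintype.card_le_of_injective _ hinj
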